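/- Let K be a field, V a finite-dimensional K-vector space, and 𝔤 a Lie subalgebra of End_K(V) (with the commutator bracket). Let 𝔫 be a Lie ideal of 𝔤 and 𝔞 a Lie subalgebra of 𝔤. If every element of 𝔫 is a nilpotent endomorphism of V and every element of 𝔞 is a nilpotent endomorphism of V, then every element of the subspace 𝔞 + 𝔫 is a nilpotent endomorphism of V. -/

import Mathlib

attribute [local instance 100] LieRing.ofAssociativeRing

/-- Lemma (e.g. Hochschild, Ch. VII, Lemma 1.4): if `𝔤` is a linear Lie algebra,
`𝔫` a Lie ideal of `𝔤` and `𝔞` a Lie subalgebra of `𝔤`, and all elements of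
`𝔫 ∪ 𝔞` are nilpotent endomorphisms, then all elements of `𝔞 + 𝔫` are nilpotent. -/
theorem stmt_0 {K V : Type*} [Field K] [AddCommGroup V] [Module K V]
    [FiniteDimensional K V]
    (g : LieSubalgebra K (Module.End K V))
    (n : Submodule K (Module.End K V))
    (a : LieSubalgebra K (Module.End K V))
    (hng : n ≤ g.toSubmodule) (hag : a ≤ g)
    (hideal : ∀ x ∈ g, ∀ y ∈ n, ⁅x, y⁆ ∈ n)
    (hn : ∀ f ∈ n, IsNilpotent f)
    (ha : ∀ f ∈ a, IsNilpotent f) :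
    ∀ f ∈ a.toSubmodule ⊔ n, IsNilpotent f := by
  -- view `n` as a Lie subalgebra
  let N : LieSubalgebra K (Module.End K V) :=
    { toSubmodule := n, lie_mem' := fun {x y} hx hy => hideal x (hng hx) y hy }
  -- Engel's theorem: V is a nilpotent N-module
  have hEng : LieModule.IsNilpotent N V := by
    apply LieAlgebra.isEngelian_of_isNoetherian (R := K)
    intro z
    have hz : LieModule.toEnd K N V z = z.1 := by
      rw [LieSubalgebra.toEnd_eq, LieModule.toEnd_module_end]; rfl
    rw [hz]
    exact hn z.1 z.2
  obtain ⟨r, hr⟩ := LieModule.IsNilpotent.nilpotent K N V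
  set F : ℕ → Submodule K V := fun k => (LieModule.lowerCentralSeries K N V k).toSubmodule with hF
  have hFn : ∀ k, ∀ y ∈ n, ∀ v ∈ F k, y v ∈ F (k + 1) := by
    intro k y hy v hv
    have h1 : ⁅(⟨y, hy⟩ : N), v⁆ ∈ ⁅(⊤ : LieIdeal K N), LieModule.lowerCentralSeries K N V k⁆ :=
      LieSubmodule.lie_mem_lie (LieSubmodule.mem_top _) hv
    rw [← LieModule.lowerCentralSeries_succ] at h1
    exact h1
  have hFg : ∀ x ∈ g, ∀ k, ∀ v ∈ F k, x v ∈ F k := by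
    intro x hx k
    induction k with
    | zero => intro v _; simp [hF]
    | succ k ih =>
      intro v hv
      have hv' : v ∈ Submodule.span K
          {m | ∃ z ∈ (⊤ : LieIdeal K N), ∃ w ∈ LieModule.lowerCentralSeries K N V k, ⁅z, w⁆ = m} := by
        rw [← LieSubmodule.lieIdeal_oper_eq_linear_span', ← LieModule.lowerCentralSeries_succ]
        exact hv
      refine Submodule.span_induction ?_ ?_ ?_ ?_ hv'
      · rintro m ⟨z, -, w, hw, rfl⟩
        have hbr : (⁅z, w⁆ : V) = z.1 w := rfl
        have heq : x (z.1 w) = z.1 (x w) + (⁅x, z.1⁆ : Module.End K V) w := by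
          simp only [Ring.lie_def, LinearMap.sub_apply, Module.End.mul_apply]
          abel
        rw [hbr, heq]
        exact Submodule.add_mem _ (hFn k z.1 z.2 (x w) (ih w hw))
          (hFn k _ (hideal x hx z.1 z.2) w hw)
      · simp
      · intro p q _ _ hp hq; rw [map_add]; exact Submodule.add_mem _ hp hq
      · intro c p _ hp; rw [map_smul]; exact Submodule.smul_mem _ c hp
  -- main argument
  intro f hf
  obtain ⟨x, hx, y, hy, rfl⟩ := Submodule.mem_sup.mp hf
  obtain ⟨m, hm⟩ := ha x hx
  have hxg : (x : Module.End K V) ∈ g := hag hx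
  have hyg : (y : Module.End K V) ∈ g := hng hy
  set f : Module.End K V := x + y with hfdef
  have hfF : ∀ k, ∀ v ∈ F k, f v ∈ F k := by
    intro k v hv
    have := hFg x hxg k v hv
    have h2 : y v ∈ F k := by
      cases k with
      | zero => simp [hF]
      | succ k => exact hFg y hyg (k + 1) v hv
    simpa [hfdef, LinearMap.add_apply] using Submodule.add_mem _ this h2
  have key : ∀ k, ∀ v ∈ F k, (f ^ m) v ∈ F (k + 1) := by
    intro k
    have claim : ∀ j, ∀ v ∈ F k, (f ^ j) v ∈ F k ∧ (f ^ j) v - (x ^ j : Module.End K V) v ∈ F (k + 1) := by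
      intro j
      induction j with
      | zero => intro v hv; exact ⟨by simpa using hv, by simp⟩
      | succ j ih =>
        intro v hv
        obtain ⟨h1, h2⟩ := ih v hv
        constructor
        · rw [pow_succ', Module.End.mul_apply]
          exact hfF k _ h1
        · have e1 : (f ^ (j + 1)) v - (x ^ (j + 1) : Module.End K V) v
              = x ((f ^ j) v - (x ^ j : Module.End K V) v) + y ((f ^ j) v) := by
            simp only [pow_succ', Module.End.mul_apply, hfdef, LinearMap.add_apply, map_sub]
            abel
          rw [e1]
          exact Submodule.add_mem _ (hFg x hxg (k + 1) _ h2) (hFn k y hy _ h1)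
    intro v hv
    have h2 := (claim m v hv).2
    rw [hm] at h2
    simpa using h2
  have chain : ∀ k, ∀ v, (f ^ (m * k)) v ∈ F k := by
    intro k
    induction k with
    | zero => intro v; simp [hF]
    | succ k ih =>
      intro v
      have : f ^ (m * (k + 1)) = f ^ m * f ^ (m * k) := by
        rw [← pow_add]; ring_nf
      rw [this, Module.End.mul_apply]
      exact key k _ (ih v)
  refine ⟨m * r, ?_⟩
  ext v
  have := chain r v
  rw [hF] at this
  simp only [hr] at this
  simpa using this
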